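/- Let n ≥ 2 and 2 ≤ r ≤ n. For every λ ∈ Γ_r one has H_{r−1}(λ) ≥ H_r(λ)^{(r−1)/r} > 0. -/

import Mathlib

/-- The `k`-th elementary symmetric function of `l = (l 0, …, l (n-1)) ∈ ℝⁿ`. -/
noncomputable def esymm (n k : ℕ) (l : Fin n → ℝ) : ℝ :=
  ∑ s ∈ Finset.powersetCard k (Finset.univ : Finset (Fin n)), ∏ i ∈ s, l i

/-- The normalized `k`-th mean curvature function `H_k(λ) = σ_k(λ) / C(n,k)`. -/
noncomputable def meanH (n k : ℕ) (l : Fin n → ℝ) : ℝ :=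
  esymm n k l / (n.choose k : ℝ)

/-- The Gårding cone `Γ_k ⊆ ℝⁿ`: the connected component of `{λ : σ_k(λ) > 0}`
containing the vector `(1,…,1)`. -/
noncomputable def gardingCone (n k : ℕ) : Set (Fin n → ℝ) :=
  connectedComponentIn {l : Fin n → ℝ | 0 < esymm n k l} (fun _ => 1)

open Polynomial Finset Nat

/-- The polynomial ∏ (X + l i). -/
noncomputable def symPoly (n : ℕ) (l : Fin n → ℝ) : Polynomial ℝ :=
  ∏ i : Fin n, (X + C (l i))

lemma symPoly_splits (n : ℕ) (l : Fin n → ℝ) : Splits (symPoly n l) :=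
  Splits.prod fun i _ => Splits.of_natDegree_le_one ((natDegree_X_add_C _).le)

lemma symPoly_natDegree (n : ℕ) (l : Fin n → ℝ) : (symPoly n l).natDegree = n := by
  simpa [symPoly] using natDegree_prod_of_monic Finset.univ (fun i : Fin n => X + C (l i))
    (fun i _ => monic_X_add_C _)

lemma symPoly_coeff (n j : ℕ) (hj : j ≤ n) (l : Fin n → ℝ) :
    (symPoly n l).coeff (n - j) = esymm n j l := by
  have h : n - j ≤ (Finset.univ : Finset (Fin n)).card := by simp [Nat.sub_le]
  have := Finset.prod_X_add_C_coeff (Finset.univ : Finset (Fin n)) l h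
  rw [symPoly, this]
  simp [esymm, Nat.sub_sub_self hj]

/-- Derivative of a real polynomial that splits, splits (or is zero). -/
lemma splits_derivative {p : ℝ[X]} (hp : Splits p) :
    derivative p = 0 ∨ Splits (derivative p) := by
  by_cases h0 : derivative p = 0
  · exact Or.inl h0
  · right
    have hpne : p ≠ 0 := fun h => h0 (by simp [h])
    have hdeg : p.natDegree ≠ 0 := by
      intro h
      obtain ⟨c, rfl⟩ := (natDegree_eq_zero).mp h
      simp at h0
    rw [splits_iff_card_roots]
    have h1 : Multiset.card (derivative p).roots ≤ (derivative p).natDegree :=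
      (derivative p).card_roots' 
    have h2 : (derivative p).natDegree ≤ p.natDegree - 1 :=
      Nat.le_sub_one_of_lt (natDegree_derivative_lt hdeg)
    have h3 : Multiset.card p.roots ≤ Multiset.card (derivative p).roots + 1 :=
      p.card_roots_le_derivative
    have h4 : Multiset.card p.roots = p.natDegree := splits_iff_card_roots.mp hp
    omega

/-- Reflection of a real polynomial that splits, splits. -/
lemma splits_reflect {N : ℕ} {p : ℝ[X]} (hN : p.natDegree ≤ N)
    (hp : Splits p) : Splits (reflect N p) := by
  by_cases h0 : p = 0
  · simp [h0]
  have hfac := hp.eq_prod_roots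
  have hcard : Multiset.card p.roots = p.natDegree := splits_iff_card_roots.mp hp
  -- generalize: reflect N (C c * (M.map (X - C ·)).prod) splits for card M ≤ N
  suffices H : ∀ (M : Multiset ℝ) (N : ℕ), Multiset.card M ≤ N → ∀ c : ℝ,
      Splits (reflect N (C c * (M.map fun a => X - C a).prod)) by
    rw [hfac]
    exact H p.roots N (hcard ▸ hN) _
  intro M
  induction M using Multiset.induction with
  | empty =>
    intro N _ c
    simp only [Multiset.map_zero, Multiset.prod_zero, mul_one, reflect_C]
    exact (Splits.C _).mul (Splits.X.pow _)
  | cons a M ih =>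
    intro N hcard c
    have hN1 : 1 ≤ N := le_trans (by simp) hcard
    have hrw : C c * ((a ::ₘ M).map fun a => X - C a).prod
        = (X - C a) * (C c * (M.map fun a => X - C a).prod) := by
      rw [Multiset.map_cons, Multiset.prod_cons]; ring
    have hdeg2 : (C c * (M.map fun a => X - C a).prod).natDegree ≤ N - 1 := by
      refine le_trans (natDegree_mul_le) ?_
      have : ((M.map fun a => X - C a).prod).natDegree ≤ Multiset.card M := by
        refine le_trans (natDegree_multiset_prod_le _) ?_
        rw [Multiset.map_map]
        refine le_trans (Multiset.sum_le_card_nsmul _ 1 ?_) (by simp)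
        intro x hx
        simp only [Multiset.mem_map, Function.comp] at hx
        obtain ⟨b, _, rfl⟩ := hx
        exact (natDegree_X_sub_C_le _)
      simp only [natDegree_C, zero_add]
      rw [Multiset.card_cons] at hcard
      omega
    have hrefl : reflect N ((X - C a) * (C c * (M.map fun a => X - C a).prod))
        = reflect 1 (X - C a) * reflect (N - 1) (C c * (M.map fun a => X - C a).prod) := by
      have := reflect_mul (X - C a) (C c * (M.map fun a => X - C a).prod)
        (natDegree_X_sub_C_le _) hdeg2
      rwa [Nat.add_sub_cancel' hN1] at this
    rw [hrw, hrefl]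
    refine Splits.mul (Splits.of_natDegree_le_one ?_) (ih (N - 1) (by simpa using Nat.le_sub_one_of_lt (lt_of_lt_of_le (by simp) hcard)) c)
    refine natDegree_le_iff_coeff_eq_zero.mpr fun i hi => ?_
    rw [coeff_reflect]
    rw [revAt_eq_self_of_lt hi]
    exact coeff_eq_zero_of_natDegree_lt (lt_of_le_of_lt (natDegree_X_sub_C_le _) hi)

/-- A real quadratic that splits has nonnegative discriminant. -/
lemma discrim_nonneg_of_splits {p : ℝ[X]} (hdeg : p.natDegree ≤ 2)
    (hp : p = 0 ∨ Splits p) :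
    4 * p.coeff 2 * p.coeff 0 ≤ (p.coeff 1) ^ 2 := by
  rcases hp with rfl | hp
  · simp
  by_cases h2 : p.coeff 2 = 0
  · rw [h2]; nlinarith [sq_nonneg (p.coeff 1)]
  have hpne : p ≠ 0 := fun h => h2 (by simp [h])
  have hdeg2 : p.natDegree = 2 := le_antisymm hdeg (le_natDegree_of_ne_zero h2)
  have hcard : Multiset.card p.roots = 2 := by
    rw [splits_iff_card_roots.mp hp, hdeg2]
  obtain ⟨r, s, hrs⟩ := Multiset.card_eq_two.mp hcard
  have hfac := hp.eq_prod_roots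
  rw [hrs] at hfac
  simp only [Multiset.insert_eq_cons, Multiset.map_cons, Multiset.map_singleton, Multiset.prod_cons,
    Multiset.prod_singleton] at hfac
  have hlc : p.leadingCoeff = p.coeff 2 := by rw [leadingCoeff, hdeg2]
  have hexp : p = C p.leadingCoeff * X ^ 2 - C (p.leadingCoeff * (r + s)) * X
      + C (p.leadingCoeff * (r * s)) := by
    conv_lhs => rw [hfac]
    simp only [C_mul, C_add]; ring
  have h0 : p.coeff 0 = p.coeff 2 * (r * s) := by
    conv_lhs => rw [hexp]
    simp [coeff_one, hlc]
  have h1 : p.coeff 1 = p.coeff 2 * (-(r + s)) := by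
    conv_lhs => rw [hexp]
    simp [coeff_one, hlc, coeff_X]
    ring
  rw [h0, h1]
  nlinarith [sq_nonneg (r - s), sq_nonneg (p.coeff 2 * (r - s))]

lemma key_identity (k b : ℕ) :
    ((((1+b).descFactorial b : ℕ) : ℝ) * (((1+k).descFactorial k : ℕ) : ℝ))^2
        * (((k+2+b).choose (k+1) : ℕ) : ℝ)^2
      = 4 * (((2+b).descFactorial b : ℕ) : ℝ) * ((k.descFactorial k : ℕ) : ℝ)
        * ((b.descFactorial b : ℕ) : ℝ) * (((2+k).descFactorial k : ℕ) : ℝ)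
        * (((k+2+b).choose k : ℕ) : ℝ) * (((k+2+b).choose (k+2) : ℕ) : ℝ) := by
  have s1 : k + 2 + b - (k + 1) = b + 1 := by omega
  have s2 : k + 2 + b - k = b + 2 := by omega
  have s3 : k + 2 + b - (k + 2) = b := by omega
  have s4 : 2 + b - b = 2 := by omega
  have s5 : 2 + k - k = 2 := by omega
  have e1 : (((k+2+b).choose (k+1) : ℕ) : ℝ) = ((k+2+b)! : ℝ) / ((k+1)! * (b+1)!) := by
    rw [Nat.cast_choose ℝ (by omega), s1]
  have e2 : (((k+2+b).choose k : ℕ) : ℝ) = ((k+2+b)! : ℝ) / ((k)! * (b+2)!) := by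
    rw [Nat.cast_choose ℝ (by omega), s2]
  have e3 : (((k+2+b).choose (k+2) : ℕ) : ℝ) = ((k+2+b)! : ℝ) / ((k+2)! * (b)!) := by
    rw [Nat.cast_choose ℝ (by omega), s3]
  have d1 : ((1+b).descFactorial b : ℕ) = (b+1)! := by
    rw [descFactorial_eq_factorial_mul_choose, Nat.add_comm 1 b, choose_succ_self_right,
      Nat.factorial_succ, Nat.mul_comm]
  have d2 : ((1+k).descFactorial k : ℕ) = (k+1)! := by
    rw [descFactorial_eq_factorial_mul_choose, Nat.add_comm 1 k, choose_succ_self_right,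
      Nat.factorial_succ, Nat.mul_comm]
  have d3 : (((2+b).descFactorial b : ℕ) : ℝ) = ((b)! : ℝ) * (((2+b)! : ℝ) / ((2:ℝ) * (b)!)) := by
    rw [descFactorial_eq_factorial_mul_choose]
    push_cast
    rw [Nat.cast_choose ℝ (by omega), s4]
    norm_num [Nat.factorial_two]; left; ring
  have d4 : (((2+k).descFactorial k : ℕ) : ℝ) = ((k)! : ℝ) * (((2+k)! : ℝ) / ((2:ℝ) * (k)!)) := by
    rw [descFactorial_eq_factorial_mul_choose]
    push_cast
    rw [Nat.cast_choose ℝ (by omega), s5]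
    norm_num [Nat.factorial_two]; left; ring
  rw [e1, e2, e3, d1, d2, d3, d4, Nat.descFactorial_self, Nat.descFactorial_self]
  have h2b : ((2+b)! : ℝ) = ((b+2)! : ℝ) := by rw [Nat.add_comm]
  have h2k : ((2+k)! : ℝ) = ((k+2)! : ℝ) := by rw [Nat.add_comm]
  rw [h2b, h2k]
  have nz : ∀ m : ℕ, ((m)! : ℝ) ≠ 0 := fun m => Nat.cast_ne_zero.mpr (Nat.factorial_ne_zero m)
  field_simp
  ring

lemma natDegree_iterate_derivative_le (p : ℝ[X]) (m N : ℕ) (h : p.natDegree ≤ N + m) :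
    (Polynomial.derivative^[m] p).natDegree ≤ N := by
  refine natDegree_le_iff_coeff_eq_zero.mpr fun i hi => ?_
  rw [coeff_iterate_derivative, coeff_eq_zero_of_natDegree_lt (by omega)]
  simp

lemma splits_iterate_derivative {p : ℝ[X]} (m : ℕ) (hp : p = 0 ∨ Splits p) :
    Polynomial.derivative^[m] p = 0 ∨ Splits (Polynomial.derivative^[m] p) := by
  induction m with
  | zero => simpa using hp
  | succ m ih =>
    rw [Function.iterate_succ_apply']
    rcases ih with h | h
    · left; rw [h]; simp
    · exact splits_derivative h

lemma natDegree_reflect_le {p : ℝ[X]} {N : ℕ} (h : p.natDegree ≤ N) :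
    (reflect N p).natDegree ≤ N := by
  refine natDegree_le_iff_coeff_eq_zero.mpr fun i hi => ?_
  rw [coeff_reflect, revAt_eq_self_of_lt hi]
  exact coeff_eq_zero_of_natDegree_lt (lt_of_le_of_lt h hi)

/-- Newton's inequality for arbitrary real numbers. -/
lemma newton_ineq (k b : ℕ) (l : Fin (k+2+b) → ℝ) :
    esymm (k+2+b) k l * esymm (k+2+b) (k+2) l * (((k+2+b).choose (k+1) : ℕ) : ℝ)^2 ≤
      esymm (k+2+b) (k+1) l ^ 2 * (((k+2+b).choose k : ℕ) : ℝ)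
        * (((k+2+b).choose (k+2) : ℕ) : ℝ) := by
  set q : ℝ[X] := reflect (k+2+b) (symPoly (k+2+b) l) with hq
  have hq_deg : q.natDegree ≤ (k+2+b) := natDegree_reflect_le (by rw [symPoly_natDegree])
  have hq_coeff : ∀ j, j ≤ (k+2+b) → q.coeff j = esymm (k+2+b) j l := by
    intro j hj
    rw [hq, coeff_reflect, revAt_le hj, symPoly_coeff (k+2+b) j hj]
  have hq_splits : q = 0 ∨ Splits q :=
    Or.inr (splits_reflect (by rw [symPoly_natDegree]) (symPoly_splits (k+2+b) l))
  set q1 : ℝ[X] := Polynomial.derivative^[k] q with hq1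
  have hq1_deg : q1.natDegree ≤ b + 2 :=
    natDegree_iterate_derivative_le _ _ _ (by omega)
  have hq1_splits : q1 = 0 ∨ Splits q1 := splits_iterate_derivative k hq_splits
  set q2 : ℝ[X] := reflect (b+2) q1 with hq2
  have hq2_deg : q2.natDegree ≤ b + 2 := natDegree_reflect_le hq1_deg
  have hq2_splits : q2 = 0 ∨ Splits q2 := by
    rcases hq1_splits with h | h
    · left; rw [hq2, h]; simp
    · exact Or.inr (splits_reflect hq1_deg h)
  set q3 : ℝ[X] := Polynomial.derivative^[b] q2 with hq3
  have hq3_deg : q3.natDegree ≤ 2 := natDegree_iterate_derivative_le _ _ _ (by omega)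
  have hq3_splits := splits_iterate_derivative b hq2_splits
  have disc := discrim_nonneg_of_splits hq3_deg hq3_splits
  -- compute the three coefficients
  have c0 : q3.coeff 0 = ((b.descFactorial b : ℕ) : ℝ)
      * (((2+k).descFactorial k : ℕ) : ℝ) * esymm (k+2+b) (k+2) l := by
    rw [hq3, coeff_iterate_derivative, hq2, coeff_reflect, revAt_le (by omega : 0 + b ≤ b + 2)]
    have h2 : b + 2 - (0 + b) = 2 := by omega
    rw [h2, hq1, coeff_iterate_derivative, hq_coeff (2 + k) (by omega)]
    have : esymm (k+2+b) (2 + k) l = esymm (k+2+b) (k + 2) l := by rw [Nat.add_comm 2 k]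
    rw [this]
    simp [nsmul_eq_mul]
    ring
  have c1 : q3.coeff 1 = (((1+b).descFactorial b : ℕ) : ℝ)
      * (((1+k).descFactorial k : ℕ) : ℝ) * esymm (k+2+b) (k+1) l := by
    rw [hq3, coeff_iterate_derivative, hq2, coeff_reflect, revAt_le (by omega : 1 + b ≤ b + 2)]
    have h2 : b + 2 - (1 + b) = 1 := by omega
    rw [h2, hq1, coeff_iterate_derivative, hq_coeff (1 + k) (by omega)]
    have : esymm (k+2+b) (1 + k) l = esymm (k+2+b) (k + 1) l := by rw [Nat.add_comm 1 k]
    rw [this]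
    simp [nsmul_eq_mul]
    ring
  have c2 : q3.coeff 2 = (((2+b).descFactorial b : ℕ) : ℝ)
      * ((k.descFactorial k : ℕ) : ℝ) * esymm (k+2+b) k l := by
    rw [hq3, coeff_iterate_derivative, hq2, coeff_reflect, revAt_le (by omega : 2 + b ≤ b + 2)]
    have h2 : b + 2 - (2 + b) = 0 := by omega
    rw [h2, hq1, coeff_iterate_derivative, hq_coeff (0 + k) (by omega)]
    have : esymm (k+2+b) (0 + k) l = esymm (k+2+b) k l := by rw [Nat.zero_add k]
    rw [this]
    simp [nsmul_eq_mul]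
    ring
  rw [c0, c1, c2] at disc
  -- final arithmetic
  set σ0 := esymm (k+2+b) k l
  set σ1 := esymm (k+2+b) (k+1) l
  set σ2 := esymm (k+2+b) (k+2) l
  set D0 : ℝ := ((b.descFactorial b : ℕ) : ℝ) with hD0
  set D1 : ℝ := (((1+b).descFactorial b : ℕ) : ℝ) with hD1
  set D2 : ℝ := (((2+b).descFactorial b : ℕ) : ℝ) with hD2
  set K0 : ℝ := ((k.descFactorial k : ℕ) : ℝ) with hK0
  set K1 : ℝ := (((1+k).descFactorial k : ℕ) : ℝ) with hK1
  set K2 : ℝ := (((2+k).descFactorial k : ℕ) : ℝ) with hK2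
  set C0 : ℝ := (((k+2+b).choose k : ℕ) : ℝ) with hC0
  set C1 : ℝ := (((k+2+b).choose (k+1) : ℕ) : ℝ) with hC1
  set C2 : ℝ := (((k+2+b).choose (k+2) : ℕ) : ℝ) with hC2
  have key : (D1 * K1)^2 * C1^2 = 4 * D2 * K0 * D0 * K2 * C0 * C2 := key_identity k b
  have hQpos : (0:ℝ) < (D1 * K1)^2 := by
    have h1 : 0 < (1+b).descFactorial b := by
      rw [descFactorial_eq_factorial_mul_choose]
      exact Nat.mul_pos (Nat.factorial_pos b) (Nat.choose_pos (by omega))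
    have h2 : 0 < (1+k).descFactorial k := by
      rw [descFactorial_eq_factorial_mul_choose]
      exact Nat.mul_pos (Nat.factorial_pos k) (Nat.choose_pos (by omega))
    have hh1 : (0:ℝ) < D1 := by rw [hD1]; exact_mod_cast h1
    have hh2 : (0:ℝ) < K1 := by rw [hK1]; exact_mod_cast h2
    positivity
  have hCC : (0:ℝ) ≤ C0 * C2 := by positivity
  rw [← mul_le_mul_iff_of_pos_left hQpos]
  have e1 : (D1*K1)^2 * (σ0 * σ2 * C1^2) = (C0*C2) * (4 * (D2 * K0 * σ0) * (D0 * K2 * σ2)) := by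
    linear_combination (σ0 * σ2) * key
  have e2 : (D1*K1)^2 * (σ1^2 * C0 * C2) = (C0*C2) * ((D1 * K1 * σ1)^2) := by ring
  calc (D1*K1)^2 * (σ0 * σ2 * C1^2)
      = (C0*C2) * (4 * (D2 * K0 * σ0) * (D0 * K2 * σ2)) := e1
    _ ≤ (C0*C2) * ((D1 * K1 * σ1)^2) := by
        refine mul_le_mul_of_nonneg_left ?_ hCC
        calc 4 * (D2 * K0 * σ0) * (D0 * K2 * σ2)
            = 4 * (D2 * K0 * σ0) * (D0 * K2 * σ2) := rfl
          _ ≤ (D1 * K1 * σ1)^2 := disc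
    _ = (D1*K1)^2 * (σ1^2 * C0 * C2) := e2.symm

lemma esymm_shift (n j : ℕ) (hj : j ≤ n) (l : Fin n → ℝ) (t : ℝ) :
    esymm n j (fun i => l i + t)
      = ∑ u ∈ Finset.range (j+1),
          (((u + (n-j)).choose (n-j) : ℕ) : ℝ) * esymm n (j-u) l * t^u := by
  have hP : symPoly n (fun i => l i + t) = taylor t (symPoly n l) := by
    rw [taylor_apply, symPoly, symPoly, Polynomial.prod_comp]
    refine Finset.prod_congr rfl fun i _ => ?_
    rw [add_comp, X_comp, C_comp, C_add]
    ring
  have h1 : esymm n j (fun i => l i + t) = (taylor t (symPoly n l)).coeff (n - j) := by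
    rw [← hP, symPoly_coeff n j hj]
  rw [h1, taylor_coeff]
  have hdeg : (hasseDeriv (n-j) (symPoly n l)).natDegree < j + 1 := by
    have := natDegree_hasseDeriv_le (symPoly n l) (n - j)
    rw [symPoly_natDegree] at this
    omega
  rw [eval_eq_sum_range' hdeg]
  refine Finset.sum_congr rfl fun u hu => ?_
  rw [Finset.mem_range] at hu
  rw [hasseDeriv_coeff]
  have hidx : u + (n - j) = n - (j - u) := by omega
  rw [hidx, symPoly_coeff n (j - u) (by omega)]

lemma esymm_zero_eq (n : ℕ) (l : Fin n → ℝ) : esymm n 0 l = 1 := by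
  simp [esymm]

lemma meanH_zero (n : ℕ) (l : Fin n → ℝ) : meanH n 0 l = 1 := by
  simp [meanH, esymm_zero_eq]

lemma continuous_esymm (n k : ℕ) : Continuous (fun l : Fin n → ℝ => esymm n k l) := by
  apply continuous_finset_sum
  intro s _
  exact continuous_finset_prod s fun i _ => continuous_apply i

lemma esymm_ones (n k : ℕ) : esymm n k (fun _ => (1:ℝ)) = (n.choose k : ℝ) := by
  simp only [esymm, Finset.prod_const_one, Finset.sum_const, nsmul_eq_mul, mul_one]
  rw [Finset.card_powersetCard, Finset.card_univ, Fintype.card_fin]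

/-- Newton's inequality in normalized form. -/
lemma newton_meanH (n k : ℕ) (hk : k + 2 ≤ n) (l : Fin n → ℝ) :
    meanH n k l * meanH n (k+2) l ≤ meanH n (k+1) l ^ 2 := by
  obtain ⟨b, rfl⟩ : ∃ b, n = k + 2 + b := ⟨n - (k+2), by omega⟩
  have h := newton_ineq k b l
  have hC0 : (0:ℝ) < (((k+2+b).choose k : ℕ) : ℝ) := by
    exact_mod_cast Nat.choose_pos (by omega)
  have hC1 : (0:ℝ) < (((k+2+b).choose (k+1) : ℕ) : ℝ) := by
    exact_mod_cast Nat.choose_pos (by omega)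
  have hC2 : (0:ℝ) < (((k+2+b).choose (k+2) : ℕ) : ℝ) := by
    exact_mod_cast Nat.choose_pos (by omega)
  rw [meanH, meanH, meanH, _root_.div_mul_div_comm, div_pow,
    div_le_div_iff₀ (by positivity) (by positivity)]
  nlinarith [h]

/-- Maclaurin step: `H_{k+1}^k ≤ H_k^{k+1}`. -/
lemma macl_step (n r : ℕ) (hrn : r ≤ n) (l : Fin n → ℝ)
    (hpos : ∀ j, j ≤ r → 0 < meanH n j l) :
    ∀ k, k + 1 ≤ r → meanH n (k+1) l ^ k ≤ meanH n k l ^ (k+1) := by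
  intro k
  induction k with
  | zero => intro _; simp [meanH_zero]
  | succ k ih =>
    intro hk2
    have hnewton := newton_meanH n k (by omega) l
    have ihk := ih (by omega)
    have h0 : 0 < meanH n k l := hpos k (by omega)
    have h1 : 0 < meanH n (k+1) l := hpos (k+1) (by omega)
    have h2 : 0 < meanH n (k+2) l := hpos (k+2) (by omega)
    -- (H_k H_{k+2})^{k+1} ≤ (H_{k+1}^2)^{k+1}
    have hA : (meanH n k l * meanH n (k+2) l) ^ (k+1) ≤ (meanH n (k+1) l ^ 2) ^ (k+1) :=
      pow_le_pow_left₀ (by positivity) hnewton (k+1)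
    have hB : meanH n (k+2) l ^ (k+1) * meanH n k l ^ (k+1)
        ≤ meanH n (k+1) l ^ (k+2) * meanH n (k+1) l ^ k := by
      calc meanH n (k+2) l ^ (k+1) * meanH n k l ^ (k+1)
          = (meanH n k l * meanH n (k+2) l) ^ (k+1) := by ring
        _ ≤ (meanH n (k+1) l ^ 2) ^ (k+1) := hA
        _ = meanH n (k+1) l ^ (k+2) * meanH n (k+1) l ^ k := by ring
    have hC : meanH n (k+1) l ^ (k+2) * meanH n (k+1) l ^ k
        ≤ meanH n (k+1) l ^ (k+2) * meanH n k l ^ (k+1) :=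
      mul_le_mul_of_nonneg_left ihk (by positivity)
    have hD : meanH n (k+2) l ^ (k+1) * meanH n k l ^ (k+1)
        ≤ meanH n (k+1) l ^ (k+2) * meanH n k l ^ (k+1) := le_trans hB hC
    have hkpos : (0:ℝ) < meanH n k l ^ (k+1) := by positivity
    exact (mul_le_mul_iff_of_pos_right hkpos).mp hD

/-- Maclaurin chain: `H_r^j ≤ H_j^r` for `j ≤ r`. -/
lemma macl_chain (n r : ℕ) (hrn : r ≤ n) (l : Fin n → ℝ)
    (hpos : ∀ j, j ≤ r → 0 < meanH n j l) :
    ∀ d j, j + d = r → meanH n r l ^ j ≤ meanH n j l ^ r := by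
  intro d
  induction d with
  | zero => intro j hj; rw [← hj]; simp
  | succ d ih =>
    intro j hj
    have hstep := macl_step n r hrn l hpos j (by omega)
    have ihj := ih (j+1) (by omega)
    have h0 : 0 < meanH n j l := hpos j (by omega)
    have h1 : 0 < meanH n (j+1) l := hpos (j+1) (by omega)
    have hr : 0 < meanH n r l := hpos r le_rfl
    -- (H_r^j)^{j+1} ≤ (H_j^r)^{j+1}
    have hA : (meanH n r l ^ j) ^ (j+1) ≤ (meanH n j l ^ r) ^ (j+1) := by
      calc (meanH n r l ^ j) ^ (j+1) = (meanH n r l ^ (j+1)) ^ j := by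
            rw [← pow_mul, ← pow_mul, Nat.mul_comm]
        _ ≤ (meanH n (j+1) l ^ r) ^ j := pow_le_pow_left₀ (by positivity) ihj j
        _ = (meanH n (j+1) l ^ j) ^ r := by rw [← pow_mul, ← pow_mul, Nat.mul_comm]
        _ ≤ (meanH n j l ^ (j+1)) ^ r := pow_le_pow_left₀ (by positivity) hstep r
        _ = (meanH n j l ^ r) ^ (j+1) := by rw [← pow_mul, ← pow_mul, Nat.mul_comm]
    exact (pow_le_pow_iff_left₀ (by positivity) (by positivity) (by omega)).mp hA

lemma shift_esymm_pos (n r : ℕ) (hrn : r ≤ n) (l : Fin n → ℝ)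
    (hge : ∀ j, 1 ≤ j → j ≤ r → 0 ≤ esymm n j l) {t : ℝ} (ht : 0 < t) :
    ∀ j, 1 ≤ j → j ≤ r → 0 < esymm n j (fun i => l i + t) := by
  intro j hj1 hjr
  rw [esymm_shift n j (by omega) l t]
  apply Finset.sum_pos'
  · intro u hu
    rw [Finset.mem_range] at hu
    have h1 : (0:ℝ) ≤ (((u + (n-j)).choose (n-j) : ℕ) : ℝ) := by positivity
    have h2 : 0 ≤ esymm n (j-u) l := by
      rcases Nat.eq_zero_or_pos (j-u) with h | h
      · rw [h, esymm_zero_eq]; norm_num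
      · exact hge (j-u) h (by omega)
    exact mul_nonneg (mul_nonneg h1 h2) (pow_nonneg ht.le u)
  · refine ⟨j, Finset.self_mem_range_succ j, ?_⟩
    have hz : j - j = 0 := Nat.sub_self j
    rw [hz, esymm_zero_eq]
    have hc : 0 < (((j + (n-j)).choose (n-j) : ℕ) : ℝ) := by
      exact_mod_cast Nat.choose_pos (by omega)
    have hp : (0:ℝ) < t ^ j := pow_pos ht j
    nlinarith

lemma pos_and_macl (n r : ℕ) (hr1 : 1 ≤ r) (hrn : r ≤ n) (l : Fin n → ℝ)
    (hge : ∀ j, 1 ≤ j → j ≤ r → 0 ≤ esymm n j l) (hrpos : 0 < esymm n r l) :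
    (∀ j, 1 ≤ j → j ≤ r → 0 < esymm n j l) ∧
      meanH n r l ^ (r - 1) ≤ meanH n (r - 1) l ^ r := by
  have key : ∀ j, j ≤ r → meanH n r l ^ j ≤ meanH n j l ^ r := by
    intro j hjr
    have hineq : ∀ t : ℝ, 0 < t →
        meanH n r (fun i => l i + t) ^ j ≤ meanH n j (fun i => l i + t) ^ r := by
      intro t ht
      have hH : ∀ m, m ≤ r → 0 < meanH n m (fun i => l i + t) := by
        intro m hm
        rcases Nat.eq_zero_or_pos m with h | h
        · rw [h, meanH_zero]; norm_num
        · have hp := shift_esymm_pos n r hrn l hge ht m h hm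
          have hc : (0:ℝ) < ((n.choose m : ℕ) : ℝ) := by
            exact_mod_cast Nat.choose_pos (by omega)
          exact div_pos hp hc
      exact macl_chain n r hrn _ hH (r - j) j (by omega)
    have hshift : Continuous (fun t : ℝ => (fun i : Fin n => l i + t)) :=
      continuous_pi fun i => (continuous_const.add continuous_id)
    have h1 : Continuous (fun t : ℝ => meanH n j (fun i => l i + t)) := by
      unfold meanH
      exact ((continuous_esymm n j).comp hshift).div_const _
    have h2 : Continuous (fun t : ℝ => meanH n r (fun i => l i + t)) := by
      unfold meanH
      exact ((continuous_esymm n r).comp hshift).div_const _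
    have hcont : Continuous (fun t : ℝ =>
        meanH n j (fun i => l i + t) ^ r - meanH n r (fun i => l i + t) ^ j) :=
      (h1.pow r).sub (h2.pow j)
    have h0 : (fun i : Fin n => l i + (0:ℝ)) = l := by funext i; simp
    have hT : Filter.Tendsto (fun t : ℝ =>
        meanH n j (fun i => l i + t) ^ r - meanH n r (fun i => l i + t) ^ j)
        (nhdsWithin 0 (Set.Ioi 0)) (nhds (meanH n j l ^ r - meanH n r l ^ j)) := by
      have hTT := hcont.tendsto 0
      simp only [h0] at hTT
      exact hTT.mono_left nhdsWithin_le_nhds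
    have hEv : ∀ᶠ t in nhdsWithin (0:ℝ) (Set.Ioi 0),
        (0:ℝ) ≤ meanH n j (fun i => l i + t) ^ r - meanH n r (fun i => l i + t) ^ j := by
      refine eventually_mem_nhdsWithin.mono fun t ht => ?_
      exact sub_nonneg.mpr (hineq t ht)
    have := ge_of_tendsto hT hEv
    linarith
  have hcr : (0:ℝ) < ((n.choose r : ℕ) : ℝ) := by
    exact_mod_cast Nat.choose_pos hrn
  have hHr : 0 < meanH n r l := div_pos hrpos hcr
  constructor
  · intro j hj1 hjr
    have h1 := key j hjr
    have hcj : (0:ℝ) < ((n.choose j : ℕ) : ℝ) := by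
      exact_mod_cast Nat.choose_pos (by omega)
    have hlhs : 0 < meanH n r l ^ j := by positivity
    have hH_nonneg : 0 ≤ meanH n j l := div_nonneg (hge j hj1 hjr) hcj.le
    have hHj : 0 < meanH n j l := by
      rcases eq_or_lt_of_le hH_nonneg with h | h
      · exfalso
        rw [← h, zero_pow (by omega : r ≠ 0)] at h1
        linarith
      · exact h
    have he : esymm n j l = meanH n j l * ((n.choose j : ℕ) : ℝ) := by
      rw [meanH]
      field_simp
    rw [he]
    positivity
  · exact key (r-1) (by omega)

lemma gardingCone_subset (n r : ℕ) (hr1 : 1 ≤ r) (hrn : r ≤ n) :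
    gardingCone n r ⊆ {l : Fin n → ℝ | ∀ j, 1 ≤ j → j ≤ r → 0 < esymm n j l} := by
  set U : Set (Fin n → ℝ) := {l | 0 < esymm n r l} with hU
  set S : Set (Fin n → ℝ) := {l | ∀ j, 1 ≤ j → j ≤ r → 0 < esymm n j l} with hS
  have hSopen : IsOpen S := by
    have hSeq : S = ⋂ j ∈ Finset.Icc 1 r, {l : Fin n → ℝ | 0 < esymm n j l} := by
      ext m
      simp only [hS, Set.mem_setOf_eq, Set.mem_iInter, Finset.mem_Icc]
      constructor
      · intro h j hj; exact h j hj.1 hj.2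
      · intro h j hj1 hjr; exact h j ⟨hj1, hjr⟩
    rw [hSeq]
    exact isOpen_biInter_finset fun j _ =>
      isOpen_lt continuous_const (continuous_esymm n j)
  have h1U : (fun _ : Fin n => (1:ℝ)) ∈ U := by
    have : (0:ℝ) < ((n.choose r : ℕ) : ℝ) := by exact_mod_cast Nat.choose_pos hrn
    simpa [hU, Set.mem_setOf_eq, esymm_ones] using this
  have h1S : (fun _ : Fin n => (1:ℝ)) ∈ S := by
    intro j hj1 hjr
    have : (0:ℝ) < ((n.choose j : ℕ) : ℝ) := by
      exact_mod_cast Nat.choose_pos (le_trans hjr hrn)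
    simpa [esymm_ones] using this
  have hC : IsPreconnected (gardingCone n r) :=
    (isConnected_connectedComponentIn_iff.mpr h1U).isPreconnected
  have hCU : gardingCone n r ⊆ U := connectedComponentIn_subset _ _
  have h1C : (fun _ : Fin n => (1:ℝ)) ∈ gardingCone n r := mem_connectedComponentIn h1U
  have hclos : gardingCone n r ∩ closure S ⊆ S := by
    rintro m ⟨hmC, hmcl⟩
    have hge : ∀ j, 1 ≤ j → j ≤ r → 0 ≤ esymm n j m := by
      intro j hj1 hjr
      have hclosed : IsClosed {x : Fin n → ℝ | 0 ≤ esymm n j x} :=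
        isClosed_le continuous_const (continuous_esymm n j)
      have hsub : S ⊆ {x : Fin n → ℝ | 0 ≤ esymm n j x} := fun x hx => (hx j hj1 hjr).le
      exact (closure_minimal hsub hclosed) hmcl
    exact fun j hj1 hjr =>
      (pos_and_macl n r hr1 hrn m hge (hCU hmC)).1 j hj1 hjr
  intro x hx
  by_contra hxS
  have hcover : gardingCone n r ⊆ S ∪ (closure S)ᶜ := by
    intro y hy
    by_cases hyc : y ∈ closure S
    · exact Or.inl (hclos ⟨hy, hyc⟩)
    · exact Or.inr hyc
  have hxW : x ∈ (closure S)ᶜ := by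
    rcases hcover hx with h | h
    · exact absurd h hxS
    · exact h
  have hne := hC S (closure S)ᶜ hSopen isClosed_closure.isOpen_compl hcover
    ⟨_, h1C, h1S⟩ ⟨x, hx, hxW⟩
  obtain ⟨y, _, hyS, hyn⟩ := hne
  exact hyn (subset_closure hyS)

/-- For `n ≥ 2`, `2 ≤ r ≤ n` and `λ ∈ Γ_r`,
`H_{r−1}(λ) ≥ H_r(λ)^{(r−1)/r} > 0`. -/
theorem meanH_pred_ge_rpow (n r : ℕ) (hn : 2 ≤ n) (hr1 : 2 ≤ r) (hr : r ≤ n)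
    (l : Fin n → ℝ) (hl : l ∈ gardingCone n r) :
    meanH n r l ^ (((r : ℝ) - 1) / (r : ℝ)) ≤ meanH n (r - 1) l ∧
    0 < meanH n r l ^ (((r : ℝ) - 1) / (r : ℝ)) := by
  have hlS := gardingCone_subset n r (by omega) hr hl
  simp only [Set.mem_setOf_eq] at hlS
  have hge : ∀ j, 1 ≤ j → j ≤ r → 0 ≤ esymm n j l := fun j h1 h2 => (hlS j h1 h2).le
  have hrpos : 0 < esymm n r l := hlS r (by omega) le_rfl
  obtain ⟨hpos, hmacl⟩ := pos_and_macl n r (by omega) hr l hge hrpos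
  have hcr : (0:ℝ) < ((n.choose r : ℕ) : ℝ) := by exact_mod_cast Nat.choose_pos hr
  have hcr1 : (0:ℝ) < ((n.choose (r-1) : ℕ) : ℝ) := by
    exact_mod_cast Nat.choose_pos (by omega)
  have hx : 0 < meanH n r l := div_pos hrpos hcr
  have hy : 0 < meanH n (r-1) l := div_pos (hpos (r-1) (by omega) (by omega)) hcr1
  have hrR : (0:ℝ) < (r:ℝ) := by positivity
  refine ⟨?_, Real.rpow_pos_of_pos hx _⟩
  have hxp : 0 < meanH n r l ^ (((r : ℝ) - 1) / (r : ℝ)) := Real.rpow_pos_of_pos hx _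
  have hpow : (meanH n r l ^ (((r : ℝ) - 1) / (r : ℝ))) ^ (r : ℕ)
      = meanH n r l ^ ((r - 1 : ℕ)) := by
    rw [← Real.rpow_natCast (meanH n r l ^ (((r : ℝ) - 1) / (r : ℝ))) r,
      ← Real.rpow_mul hx.le, div_mul_cancel₀ _ (ne_of_gt hrR),
      ← Real.rpow_natCast (meanH n r l) (r-1)]
    congr 1
    push_cast [Nat.cast_sub (by omega : 1 ≤ r)]
    ring
  have hle : (meanH n r l ^ (((r : ℝ) - 1) / (r : ℝ))) ^ (r : ℕ)
      ≤ meanH n (r-1) l ^ (r : ℕ) := by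
    rw [hpow]; exact hmacl
  exact (pow_le_pow_iff_left₀ hxp.le hy.le (by omega)).mp hle
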